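/- Let A be a category and f : A ⥤ Type u a functor. For each category X, let G_X be the functor from the functor category of functors X ⥤ A to the category whose objects are functors into X and whose morphisms are functors commuting strictly with the projections to X, defined as follows: G_X sends g : X ⥤ A to the projection π : Elements (g ⋙ f) ⥤ X, and sends a natural transformation θ : g₁ ⟶ g₂ to the functor Elements (g₁ ⋙ f) ⥤ Elements (g₂ ⋙ f) given by (x, s) ↦ (x, f.map (θ.app x) s) and the identity on underlying morphisms. Then G_X is fully faithful for every category X if and only if f is fully faithful. -/

import Mathlib

open CategoryTheory

universe w v u ux vx

/-- A one-object category in arbitrary universes. -/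
def Unit13 : Type ux := PUnit

instance : Category.{vx} Unit13.{ux} where
  Hom _ _ := PUnit
  id _ := ⟨⟩
  comp _ _ := ⟨⟩

instance (X Y : Unit13.{ux}) : Subsingleton (X ⟶ Y) :=
  inferInstanceAs (Subsingleton PUnit)

instance {F : Unit13.{ux} ⥤ Type u} (p q : F.Elements) : Subsingleton (p ⟶ q) :=
  ⟨fun a b => Subtype.ext (Subsingleton.elim _ _)⟩

lemma elem13_eq {C : Type*} [Category C] {F : C ⥤ Type u} (p : F.Elements) (x : C)
    (h : p.1 = x) : p = ⟨x, F.map (eqToHom h) p.2⟩ := by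
  cases p; cases h; simp; rfl

lemma eqToHom13_val {C : Type*} [Category C] {F : C ⥤ Type u} {p q : F.Elements}
    (h : p = q) : (eqToHom h).val = eqToHom (congrArg Sigma.fst h) := by
  cases h; simp

/-- For a functor `f : A ⥤ Type u`, the Grothendieck-construction
functors `G_X` (sending `g : X ⥤ A` to the discrete opfibration
`π : Elements (g ⋙ f) ⥤ X`, and `θ : g₁ ⟶ g₂` to the induced functor over `X`) are fully
faithful for every category `X` if and only if `f` is fully faithful. -/
theorem stmt13 {A : Type v} [Category.{w} A] (f : A ⥤ Type u) :
    (∀ (X : Type ux) [Category.{vx} X] (g₁ g₂ : X ⥤ A),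
        Function.Bijective
          (fun θ : g₁ ⟶ g₂ =>
            (⟨CategoryOfElements.map (Functor.whiskerRight θ f),
              CategoryOfElements.map_π (Functor.whiskerRight θ f)⟩ :
              {H : (g₁ ⋙ f).Elements ⥤ (g₂ ⋙ f).Elements //
                H ⋙ CategoryOfElements.π (g₂ ⋙ f) = CategoryOfElements.π (g₁ ⋙ f)}))) ↔
      ∀ a a' : A, Function.Bijective (fun φ : a ⟶ a' => f.map φ) := by
  constructor
  · intro h a a'
    have hb := h Unit13.{ux} ((Functor.const _).obj a) ((Functor.const _).obj a')
    constructor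
    · intro φ ψ hφψ
      have key : (Functor.const Unit13.{ux}).map φ = (Functor.const Unit13.{ux}).map ψ := by
        apply hb.injective
        apply Subtype.ext
        show CategoryOfElements.map (Functor.whiskerRight ((Functor.const Unit13.{ux}).map φ) f) =
          CategoryOfElements.map (Functor.whiskerRight ((Functor.const Unit13.{ux}).map ψ) f)
        refine CategoryTheory.Functor.ext (fun p => ?_) (fun p q k => Subsingleton.elim _ _)
        show (((Functor.const Unit13.{ux}).obj a') ⋙ f).elementsMk p.1 (f.map φ p.2) =
          (((Functor.const Unit13.{ux}).obj a') ⋙ f).elementsMk p.1 (f.map ψ p.2)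
        rw [show f.map φ = f.map ψ from hφψ]
      exact congrArg (fun θ => θ.app ⟨⟩) key
    · intro us
      set g₁ := (Functor.const Unit13.{ux}).obj a with hg₁
      set g₂ := (Functor.const Unit13.{ux}).obj a' with hg₂
      have Hmapwd : ∀ {p q : (g₁ ⋙ f).Elements} (k : p ⟶ q),
          (g₂ ⋙ f).map k.1 (us p.2) = us q.2 := by
        intro p q k
        have h2 : (g₁ ⋙ f).map k.1 p.2 = q.2 := k.2
        have hid : k.1 = 𝟙 p.1 := Subsingleton.elim _ _
        rw [hid] at h2 ⊢
        exact ((g₂ ⋙ f).map_id_apply _ _).trans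
          (congrArg (fun t => us t) (((g₁ ⋙ f).map_id_apply _ _).symm.trans h2))
      let H : (g₁ ⋙ f).Elements ⥤ (g₂ ⋙ f).Elements :=
        { obj := fun p => ⟨p.1, us p.2⟩
          map := fun {p q} k => ⟨k.1, Hmapwd k⟩
          map_id := fun p => by apply Subtype.ext; rfl
          map_comp := fun k₁ k₂ => by apply Subtype.ext; rfl }
      obtain ⟨θ, hθ⟩ := hb.surjective ⟨H, rfl⟩
      refine ⟨θ.app ⟨⟩, ?_⟩
      have hH : CategoryOfElements.map (Functor.whiskerRight θ f) = H := congrArg Subtype.val hθ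
      ext s
      have hobj := Functor.congr_obj hH ⟨⟨⟩, s⟩
      exact eq_of_heq (Sigma.ext_iff.mp hobj).2
  · intro hf X _ g₁ g₂
    constructor
    · intro θ ψ hθψ
      have hmap : CategoryOfElements.map (Functor.whiskerRight θ f) =
          CategoryOfElements.map (Functor.whiskerRight ψ f) := congrArg Subtype.val hθψ
      ext x
      apply (hf _ _).injective
      show f.map (θ.app x) = f.map (ψ.app x)
      ext s
      have hobj := Functor.congr_obj hmap ⟨x, s⟩
      exact eq_of_heq (Sigma.ext_iff.mp hobj).2
    · rintro ⟨H, hH⟩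
      have e : ∀ p : (g₁ ⋙ f).Elements, (H.obj p).1 = p.1 := fun p => Functor.congr_obj hH p
      set k : ∀ p : (g₁ ⋙ f).Elements, f.obj (g₂.obj p.1) :=
        fun p => (g₂ ⋙ f).map (eqToHom (e p)) (H.obj p).2 with hk
      choose θapp hθapp using fun x : X =>
        (hf (g₁.obj x) (g₂.obj x)).surjective (TypeCat.ofHom (fun s => k ⟨x, s⟩))
      have hHm : ∀ {p q : (g₁ ⋙ f).Elements} (m : p ⟶ q),
          (H.map m).val = eqToHom (e p) ≫ m.val ≫ eqToHom (e q).symm := by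
        intro p q m
        have := Functor.congr_hom hH m
        simp at this
        exact this
      have knat : ∀ {p q : (g₁ ⋙ f).Elements} (m : p ⟶ q),
          k q = (g₂ ⋙ f).map m.val (k p) := by
        intro p q m
        have h2 : (g₂ ⋙ f).map (H.map m).val (H.obj p).2 = (H.obj q).2 := (H.map m).2
        rw [hHm m] at h2
        rw [hk]
        simp only [← h2, ← FunctorToTypes.map_comp_apply, Category.assoc, eqToHom_trans,
          eqToHom_refl, Category.comp_id]
      have nat : ∀ ⦃x y : X⦄ (v : x ⟶ y), g₁.map v ≫ θapp y = θapp x ≫ g₂.map v := by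
        intro x y v
        apply (hf _ _).injective
        show f.map (g₁.map v ≫ θapp y) = f.map (θapp x ≫ g₂.map v)
        ext s; change f.map _ s = f.map _ s
        have h1 : f.map (g₁.map v ≫ θapp y) s = k ⟨y, (g₁ ⋙ f).map v s⟩ := by
          rw [f.map_comp]
          have := ConcreteCategory.congr_hom (hθapp y) ((g₁ ⋙ f).map v s)
          simpa using this
        have h2 : f.map (θapp x ≫ g₂.map v) s = (g₂ ⋙ f).map v (k ⟨x, s⟩) := by
          rw [f.map_comp]
          have h3 : f.map (θapp x) s = k ⟨x, s⟩ := ConcreteCategory.congr_hom (hθapp x) s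
          simp only [types_comp_apply]
          rw [h3]
          rfl
        rw [h1, h2]
        exact knat (⟨v, rfl⟩ : (g₁ ⋙ f).elementsMk x s ⟶ (g₁ ⋙ f).elementsMk y ((g₁ ⋙ f).map v s))
      refine ⟨⟨θapp, nat⟩, ?_⟩
      apply Subtype.ext
      show CategoryOfElements.map (Functor.whiskerRight ⟨θapp, nat⟩ f) = H
      have hobj : ∀ p : (g₁ ⋙ f).Elements,
          (CategoryOfElements.map (Functor.whiskerRight ⟨θapp, nat⟩ f)).obj p = H.obj p := by
        intro p
        show (⟨p.1, f.map (θapp p.1) p.2⟩ : (g₂ ⋙ f).Elements) = H.obj p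
        have h4 : f.map (θapp p.1) p.2 = k p := ConcreteCategory.congr_hom (hθapp p.1) p.2
        rw [h4, hk]
        exact (elem13_eq (H.obj p) p.1 (e p)).symm
      refine CategoryTheory.Functor.ext hobj fun p q m => ?_
      apply Subtype.ext
      show m.val = (eqToHom (hobj p) ≫ H.map m ≫ eqToHom (hobj q).symm).val
      rw [CategoryOfElements.comp_val, CategoryOfElements.comp_val, eqToHom13_val,
        eqToHom13_val, hHm m]
      simp [eqToHom_trans]
      change m.val = 𝟙 _ ≫ m.val ≫ 𝟙 _
      simp
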